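/- For n > 2, any indices i ≠ j, and any reals 0 < p < q, the set X ∩ W_{ij} is unbounded: for every M > 0 there exists x ∈ X ∩ W_{ij} with ‖x‖ > M. -/

import Mathlib

open Real Finset

/-- For `n > 2`, the set `X ∩ W_{ij}` is unbounded. -/
theorem X_inter_W_unbounded (n : ℕ) (hn : 2 < n) (a : Fin n → ℝ) (ha : ∀ k, 0 < a k)
    (ℓ u : ℝ) (hℓ : 0 < ℓ) (hℓu : ℓ < u)
    (i j : Fin n) (hij : i ≠ j) (p q : ℝ) (hp : 0 < p) (hpq : p < q) :
    ∀ M : ℝ, 0 < M →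
      ∃ x : Fin n → ℝ, ((∀ k, 0 ≤ x k) ∧
        ℓ ≤ ∏ k, x k ^ a k ∧ (∏ k, x k ^ a k) ≤ u ∧
        p * x i ≤ x j ∧ x j ≤ q * x i) ∧ M < ‖x‖ := by
  intro M hM
  -- find a third index
  obtain ⟨k, hki, hkj⟩ : ∃ k : Fin n, k ≠ i ∧ k ≠ j := by
    have hcard : (({i, j} : Finset (Fin n))).card ≤ 2 :=
      (Finset.card_insert_le _ _).trans (by simp)
    have : ((Finset.univ : Finset (Fin n)) \ {i, j}).Nonempty := by
      rw [← Finset.card_pos]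
      have := Finset.card_sdiff_of_subset (Finset.subset_univ ({i, j} : Finset (Fin n)))
      rw [this, Finset.card_univ, Fintype.card_fin]
      omega
    obtain ⟨m, hm⟩ := this
    rw [Finset.mem_sdiff, Finset.mem_insert, Finset.mem_singleton] at hm
    exact ⟨m, fun h => hm.2 (Or.inl h), fun h => hm.2 (Or.inr h)⟩
  set t : ℝ := M + 1 with ht
  have htpos : 0 < t := by positivity
  have hbase : 0 < t ^ a i * (p * t) ^ a j := by positivity
  set s : ℝ := (ℓ / (t ^ a i * (p * t) ^ a j)) ^ (a k)⁻¹ with hs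
  have hspos : 0 < s := Real.rpow_pos_of_pos (by positivity) _
  set x : Fin n → ℝ := fun m => if m = i then t else if m = j then p * t else
    if m = k then s else 1 with hx
  have hxi : x i = t := by simp [hx]
  have hxj : x j = p * t := by simp [hx, hij.symm]
  have hxk : x k = s := by simp [hx, hki, hkj]
  have hxnn : ∀ m, 0 ≤ x m := by
    intro m
    simp only [hx]
    split_ifs <;> positivity
  have hprod : ∏ m, x m ^ a m = ℓ := by
    have h1 : ∏ m, x m ^ a m
        = x i ^ a i * (x j ^ a j * (x k ^ a k *
          ∏ m ∈ ((univ.erase i).erase j).erase k, x m ^ a m)) := by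
      rw [← Finset.mul_prod_erase univ _ (Finset.mem_univ i),
        ← Finset.mul_prod_erase _ _
          (Finset.mem_erase.mpr ⟨hij.symm, Finset.mem_univ j⟩),
        ← Finset.mul_prod_erase _ _
          (Finset.mem_erase.mpr ⟨hkj, Finset.mem_erase.mpr ⟨hki, Finset.mem_univ k⟩⟩)]
    have h2 : ∏ m ∈ ((univ.erase i).erase j).erase k, x m ^ a m = 1 := by
      apply Finset.prod_eq_one
      intro m hm
      simp only [Finset.mem_erase] at hm
      have : x m = 1 := by simp [hx, hm.2.2.1, hm.2.1, hm.1]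
      rw [this, Real.one_rpow]
    have h3 : x k ^ a k = ℓ / (t ^ a i * (p * t) ^ a j) := by
      rw [hxk, hs, ← Real.rpow_mul (by positivity),
        inv_mul_cancel₀ (ha k).ne', Real.rpow_one]
    rw [h1, h2, h3, hxi, hxj, mul_one]
    field_simp
  refine ⟨x, ⟨hxnn, by rw [hprod], by rw [hprod]; exact le_of_lt hℓu, ?_, ?_⟩, ?_⟩
  · rw [hxi, hxj]
  · rw [hxi, hxj]
    have := mul_le_mul_of_nonneg_right (le_of_lt hpq) (le_of_lt htpos)
    linarith
  · have := norm_le_pi_norm x i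
    have hi : ‖x i‖ = t := by rw [hxi, Real.norm_eq_abs, abs_of_pos htpos]
    rw [hi] at this
    linarith
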